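/- Let w be a sequence of elements of S̄ and θ a linear character of T^{wF} of order invertible in Λ. Let I(w,θ) be the set of sequences w′ ≤ w such that θ is trivial on N_w(Y_{w,w′}). Then I(w,θ) has a smallest element w_θ, given coordinatewise by replacing the i-th entry s_i of w by 1 exactly when θ(N_w(β^∨_{w,i})) = 1; moreover I(w,θ) = {x ∈ Σ(S̄) | w_θ ≤ x ≤ w}. -/

import Mathlib

open scoped Classical

/-! Setting as in the companion statements: `Y = Y(T)` is the cocharacter lattice of an
`F`-stable maximal torus `T` of a connected reductive group; a sequence
`w = (s₁, …, s_r) ∈ Σ(S̄)` is modelled by `ℤ`-linear endomorphisms `s i` of `Y`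
satisfying `s i x - x ∈ ℤ • α i` (`α i` the coroot `α^∨_{w,i}`, `0` for trivial
entries); subsequences `w′ ≤ w` are Boolean masks.  The fixed-point group `T^{wF}` is an
(additively written) abelian group `T`, `N = N_w : Y(T) → T^{wF}` is the surjective norm
map, and a linear character `θ : T^{wF} → Λˣ` is an additive homomorphism
`θ : T →+ Additive Λˣ` ("θ trivial on a set" = "θ vanishes on it"). -/

namespace DLStmt6

variable {Y : Type*} [AddCommGroup Y] [Module ℤ Y] {r : ℕ}

/-- The `i`-th entry of the masked sequence: `s i` if the mask is `true`, `1` otherwise. -/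
def entry (s : Fin r → Module.End ℤ Y) (b : Fin r → Bool) (i : Fin r) : Module.End ℤ Y :=
  if b i then s i else 1

/-- The partial product `s₁ ⋯ s_{i-1}` of the masked sequence (first `i` entries). -/
def prefixProd (s : Fin r → Module.End ℤ Y) (b : Fin r → Bool) (i : Fin r) :
    Module.End ℤ Y :=
  ((List.ofFn (entry s b)).take i).prod

/-- The product `s₁ ⋯ s_r` of the masked sequence, i.e. the action of the corresponding
Weyl group element on `Y(T)`. -/
def seqProd (s : Fin r → Module.End ℤ Y) (b : Fin r → Bool) : Module.End ℤ Y :=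
  (List.ofFn (entry s b)).prod

/-- `α^∨_{w,v,i}`: the coroot `α i` if the `i`-th entries of the two masked sequences
differ, and `0` otherwise. -/
def alphaD (α : Fin r → Y) (bw bv : Fin r → Bool) (i : Fin r) : Y :=
  if bw i = bv i then 0 else α i

/-- `β^∨_{w,v,i} = s₁ ⋯ s_{i-1} (α^∨_{w,v,i})`. -/
def betaD (s : Fin r → Module.End ℤ Y) (α : Fin r → Y) (bw bv : Fin r → Bool)
    (i : Fin r) : Y :=
  prefixProd s bw i (alphaD α bw bv i)

/-- The sublattice `Y_{w,v} ⊆ Y(T)` generated by the `β^∨_{w,v,i}`. -/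
def latt (s : Fin r → Module.End ℤ Y) (α : Fin r → Y) (bw bv : Fin r → Bool) :
    Submodule ℤ Y :=
  Submodule.span ℤ (Set.range (betaD s α bw bv))

/-- The mask of `w_θ`: the `i`-th entry of `w` is replaced by `1` exactly when
`θ(N_w(β^∨_{w,i})) = 1` (here `β^∨_{w,i} = β^∨_{w,𝟙,i}` with `𝟙` the trivial
subsequence, i.e. the all-`false` mask). -/
noncomputable def thetaMask {Λ : Type*} [CommRing Λ] {T : Type*} [AddCommGroup T]
    (s : Fin r → Module.End ℤ Y) (α : Fin r → Y) (N : Y →+ T)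
    (θ : T →+ Additive Λˣ) : Fin r → Bool :=
  fun i =>
    if θ (N (betaD s α (fun _ => true) (fun _ => false) i)) = 0 then false else true

/-- Let `w` be a sequence of elements of `S̄` and `θ` a linear character of `T^{wF}` of
order invertible in `Λ`.  Let `I(w,θ)` be the set of sequences `w′ ≤ w` such that `θ`
is trivial on `N_w(Y_{w,w′})`.  Then `I(w,θ)` has a smallest element `w_θ`, given
coordinatewise by replacing the `i`-th entry `s_i` of `w` by `1` exactly when
`θ(N_w(β^∨_{w,i})) = 1`; moreover `I(w,θ) = {x ∈ Σ(S̄) | w_θ ≤ x ≤ w}`.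

A homomorphism vanishing on generators vanishes on the `ℤ`-span. -/
theorem vanish_on_span {M : Type*} [AddCommGroup M] (φ : Y →+ M) (S : Set Y)
    (h : ∀ x ∈ S, φ x = 0) : ∀ x ∈ Submodule.span ℤ S, φ x = 0 := by
  intro x hx
  have hx' : x ∈ AddSubgroup.closure S := by
    rw [← Submodule.span_int_eq_addSubgroupClosure (M := Y) S]
    have e : ‹Module ℤ Y› = AddCommGroup.toIntModule Y := @Subsingleton.elim _ (@Unique.instSubsingleton _ AddCommGroup.uniqueIntModule) _ _
    rw [e] at hx
    exact (Submodule.mem_toAddSubgroup _).mpr hx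
  clear hx
  induction hx' using AddSubgroup.closure_induction with
  | mem x hx => exact h x hx
  | zero => exact φ.map_zero
  | add x y _ _ hx hy => rw [φ.map_add, hx, hy, add_zero]
  | neg x _ hx => rw [φ.map_neg, hx, neg_zero]

theorem statement6 {Λ : Type*} [CommRing Λ] {T : Type*} [AddCommGroup T]
    (s : Fin r → Module.End ℤ Y) (α : Fin r → Y)
    (hrefl : ∀ (i : Fin r) (x : Y), ∃ n : ℤ, s i x - x = n • α i)
    (hα0 : ∀ i : Fin r, s i = 1 → α i = 0)
    -- the norm map `N_w : Y(T) → T^{wF}` (surjective by Statement 1)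
    (N : Y →+ T) (hNsurj : Function.Surjective N)
    -- a linear character of `T^{wF}` of order invertible in `Λ`
    (θ : T →+ Additive Λˣ) (hord : IsUnit ((addOrderOf θ : ℕ) : Λ)) :
    -- `w_θ` belongs to `I(w,θ)`:
    (∀ x ∈ latt s α (fun _ => true) (thetaMask s α N θ), θ (N x) = 0) ∧
    -- and `I(w,θ)` is exactly the set of `w′ ≤ w` with `w_θ ≤ w′`:
    (∀ b : Fin r → Bool,
      (∀ x ∈ latt s α (fun _ => true) b, θ (N x) = 0) ↔ ∀ i, thetaMask s α N θ i ≤ b i) := by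
  have key : ∀ b : Fin r → Bool,
      (∀ x ∈ latt s α (fun _ => true) b, θ (N x) = 0) ↔
      ∀ i, θ (N (betaD s α (fun _ => true) b i)) = 0 := by
    intro b
    constructor
    · intro h i
      exact h _ (Submodule.subset_span ⟨i, rfl⟩)
    · intro h
      exact vanish_on_span (θ.comp N) _ (by rintro x ⟨i, rfl⟩; exact h i)
  have hbfalse : ∀ (b : Fin r → Bool) (i : Fin r), b i = false →
      betaD s α (fun _ => true) b i = betaD s α (fun _ => true) (fun _ => false) i := by
    intro b i hbi; simp [betaD, alphaD, hbi]
  have hbtrue : ∀ (b : Fin r → Bool) (i : Fin r), b i = true →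
      betaD s α (fun _ => true) b i = 0 := by
    intro b i hbi; simp [betaD, alphaD, hbi]
  have hmask : ∀ i : Fin r, thetaMask s α N θ i = false ↔
      θ (N (betaD s α (fun _ => true) (fun _ => false) i)) = 0 := by
    intro i
    unfold thetaMask
    split <;> simp_all
  have main : ∀ b : Fin r → Bool,
      (∀ x ∈ latt s α (fun _ => true) b, θ (N x) = 0) ↔
      ∀ i, thetaMask s α N θ i ≤ b i := by
    intro b
    rw [key b]
    constructor
    · intro h i
      cases hbi : b i
      · have h' := h i
        rw [hbfalse b i hbi, ← hmask i] at h'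
        simp [h']
      · simp
    · intro h i
      cases hbi : b i
      · cases hti : thetaMask s α N θ i
        · rw [hbfalse b i hbi]
          exact (hmask i).mp hti
        · have hm := h i
          rw [hbi, hti] at hm
          exact absurd hm (by decide)
      · rw [hbtrue b i hbi]
        simp
  exact ⟨(main _).mpr (fun i => le_refl _), main⟩

end DLStmt6
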